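/- For x ∈ ℝ^n and 1 ≤ k ≤ n, the sum over i of x_i^2·s_{k-1}(x|i) equals s_1(x)·s_k(x) − (k+1)·s_{k+1}(x). -/

import Mathlib

open Finset

noncomputable def esymm (n k : ℕ) (x : Fin n → ℝ) : ℝ :=
  ∑ A ∈ Finset.powersetCard k (Finset.univ : Finset (Fin n)), ∏ i ∈ A, x i

def GammaK (n k : ℕ) (x : Fin n → ℝ) : Prop :=
  ∀ l, 1 ≤ l → l ≤ k → 0 < esymm n l x

lemma esymm_update (n m : ℕ) (x : Fin n → ℝ) (i : Fin n) :
    esymm n m (Function.update x i 0) =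
      ∑ A ∈ powersetCard m ((univ : Finset (Fin n)).erase i), ∏ j ∈ A, x j := by
  unfold esymm
  rw [← Finset.sum_filter_add_sum_filter_not (powersetCard m (univ : Finset (Fin n))) (i ∈ ·)]
  have h1 : ∑ A ∈ (powersetCard m (univ : Finset (Fin n))).filter (i ∈ ·),
      ∏ j ∈ A, Function.update x i 0 j = 0 := by
    apply Finset.sum_eq_zero
    intro A hA
    simp only [mem_filter] at hA
    exact Finset.prod_eq_zero hA.2 (by simp)
  rw [h1, zero_add]
  apply Finset.sum_congr
  · ext A
    simp only [mem_filter, mem_powersetCard, subset_erase, subset_univ, true_and]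
    tauto
  · intro A hA
    simp only [mem_filter, mem_powersetCard] at hA
    exact Finset.prod_congr rfl fun j hj => Function.update_of_ne (Finset.ne_of_mem_erase (hA.1 hj)) _ _

lemma filter_sum (n m : ℕ) (x : Fin n → ℝ) (i : Fin n) :
    ∑ B ∈ (powersetCard (m + 1) (univ : Finset (Fin n))).filter (i ∈ ·), ∏ j ∈ B, x j =
      x i * ∑ A ∈ powersetCard m ((univ : Finset (Fin n)).erase i), ∏ j ∈ A, x j := by
  rw [Finset.mul_sum]
  apply Finset.sum_nbij' (fun B => B.erase i) (fun A => insert i A)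
  · intro B hB
    simp only [mem_filter, mem_powersetCard, subset_univ, true_and] at hB
    simp only [mem_powersetCard, subset_erase]
    exact ⟨⟨(erase_subset _ _).trans (subset_univ _), notMem_erase _ _⟩,
      by simp [card_erase_of_mem hB.2, hB.1]⟩
  · intro A hA
    simp only [mem_powersetCard, subset_erase] at hA
    simp only [mem_filter, mem_powersetCard, subset_univ, true_and]
    exact ⟨by rw [card_insert_of_notMem hA.1.2, hA.2], mem_insert_self _ _⟩
  · intro B hB
    simp only [mem_filter] at hB
    exact insert_erase hB.2
  · intro A hA
    simp only [mem_powersetCard, subset_erase] at hA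
    exact erase_insert hA.1.2
  · intro B hB
    simp only [mem_filter] at hB
    rw [← Finset.prod_insert (notMem_erase i B), insert_erase hB.2]

lemma esymm_split (n m : ℕ) (x : Fin n → ℝ) (i : Fin n) :
    esymm n (m + 1) x =
      x i * (∑ A ∈ powersetCard m ((univ : Finset (Fin n)).erase i), ∏ j ∈ A, x j) +
      ∑ A ∈ powersetCard (m + 1) ((univ : Finset (Fin n)).erase i), ∏ j ∈ A, x j := by
  unfold esymm
  rw [← Finset.sum_filter_add_sum_filter_not (powersetCard (m+1) (univ : Finset (Fin n))) (i ∈ ·),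
    filter_sum]
  congr 1
  apply Finset.sum_congr
  · ext A
    simp only [mem_filter, mem_powersetCard, subset_erase, subset_univ, true_and]
    tauto
  · intros; rfl

lemma sum_x_esymm (n m : ℕ) (x : Fin n → ℝ) :
    ∑ i : Fin n, x i * (∑ A ∈ powersetCard m ((univ : Finset (Fin n)).erase i), ∏ j ∈ A, x j)
      = ((m : ℝ) + 1) * esymm n (m + 1) x := by
  simp_rw [← filter_sum, Finset.sum_filter]
  rw [Finset.sum_comm]
  unfold esymm
  rw [Finset.mul_sum]
  apply Finset.sum_congr rfl
  intro B hB
  simp only [mem_powersetCard, subset_univ, true_and] at hB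
  rw [Finset.sum_ite_mem, univ_inter, Finset.sum_const, hB, nsmul_eq_mul]
  push_cast; ring

theorem esymm_sum_sq_update (n k : ℕ) (hk : 1 ≤ k) (hkn : k ≤ n) (x : Fin n → ℝ) :
    (∑ i : Fin n, (x i) ^ 2 * esymm n (k - 1) (Function.update x i 0)) =
      esymm n 1 x * esymm n k x - ((k : ℝ) + 1) * esymm n (k + 1) x := by
  obtain ⟨m, rfl⟩ : ∃ m, k = m + 1 := ⟨k - 1, (Nat.succ_pred_eq_of_pos hk).symm⟩
  have h1 : esymm n 1 x = ∑ i : Fin n, x i := by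
    simp [esymm, powersetCard_one]
  have hdec : ∀ i : Fin n, x i * esymm n m (Function.update x i 0)
      = esymm n (m + 1) x - ∑ A ∈ powersetCard (m + 1) ((univ : Finset (Fin n)).erase i), ∏ j ∈ A, x j := by
    intro i
    rw [esymm_update, esymm_split n m x i]; ring
  have e1 : ∀ i : Fin n, (x i) ^ 2 * esymm n (m + 1 - 1) (Function.update x i 0)
      = x i * (x i * esymm n m (Function.update x i 0)) := by
    intro i; simp only [Nat.add_sub_cancel]; ring
  calc (∑ i : Fin n, (x i) ^ 2 * esymm n (m + 1 - 1) (Function.update x i 0))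
      = ∑ i : Fin n, x i * (esymm n (m + 1) x - ∑ A ∈ powersetCard (m + 1) ((univ : Finset (Fin n)).erase i), ∏ j ∈ A, x j) := by
        simp_rw [e1, hdec]
    _ = (∑ i : Fin n, x i) * esymm n (m + 1) x
        - ∑ i : Fin n, x i * (∑ A ∈ powersetCard (m + 1) ((univ : Finset (Fin n)).erase i), ∏ j ∈ A, x j) := by
        rw [Finset.sum_mul, ← Finset.sum_sub_distrib]
        apply Finset.sum_congr rfl; intro i _; ring
    _ = esymm n 1 x * esymm n (m + 1) x - ((((m + 1 : ℕ)) : ℝ) + 1) * esymm n (m + 1 + 1) x := by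
        rw [sum_x_esymm n (m + 1) x, h1]
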